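/- Let 𝒞 be a treeset on a set X. Then for all u, v ∈ V_𝒞, the path-metric distance in the graph (V_𝒞, T_𝒞) satisfies d_{T_𝒞}(u,v) = |u ∖ v|. -/

import Mathlib

open Set

/-- A family of sets is *nested* if for any two members, one of the four
intersections of the sets or their complements is empty. -/
def Nested {X : Type*} (𝒞 : Set (Set X)) : Prop :=
  ∀ C ∈ 𝒞, ∀ D ∈ 𝒞, C ∩ D = ∅ ∨ C ∩ Dᶜ = ∅ ∨ Cᶜ ∩ D = ∅ ∨ Cᶜ ∩ Dᶜ = ∅

/-- A *treeset* on `X`: a family of nonempty proper subsets of `X` that is nested,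
closed under complementation and finitely separating. -/
def Treeset {X : Type*} (𝒞 : Set (Set X)) : Prop :=
  (∀ C ∈ 𝒞, C.Nonempty ∧ C ≠ Set.univ) ∧
  Nested 𝒞 ∧
  (∀ C ∈ 𝒞, Cᶜ ∈ 𝒞) ∧
  (∀ x y : X, {C | C ∈ 𝒞 ∧ x ∈ C ∧ y ∉ C}.Finite)

/-- The vertices `V_𝒞` of the structure tree: subsets `u ⊆ 𝒞` satisfying (U1)–(U3). -/
def IsVertex {X : Type*} (𝒞 : Set (Set X)) (u : Set (Set X)) : Prop :=
  u ⊆ 𝒞 ∧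
  (∀ C ∈ 𝒞, Xor' (C ∈ u) (Cᶜ ∈ u)) ∧
  (∀ C ∈ u, ∀ D ∈ 𝒞, C ⊆ D → D ∈ u) ∧
  ¬ ∃ f : ℕ → Set X, (∀ n, f n ∈ u) ∧ ∀ n, f (n + 1) ⊂ f n

/-- A *walk* of length `n` in the (directed presentation of the) edge set `E`. -/
def IsWalk {α : Type*} (E : Set (α × α)) (f : ℕ → α) (n : ℕ) : Prop :=
  ∀ i < n, (f i, f (i + 1)) ∈ E

/-- Two points are joined by an `E`-path. -/
def Reach {α : Type*} (E : Set (α × α)) (x y : α) : Prop :=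
  ∃ (n : ℕ) (f : ℕ → α), f 0 = x ∧ f n = y ∧ IsWalk E f n

/-- The extended path metric `d_E` of a graph, with values in `ℕ∞` (`∞` if no path exists). -/
noncomputable def graphDist {α : Type*} (E : Set (α × α)) (x y : α) : ℕ∞ :=
  sInf {d : ℕ∞ | ∃ (n : ℕ) (f : ℕ → α), d = (n : ℕ∞) ∧ f 0 = x ∧ f n = y ∧ IsWalk E f n}

/-- A graph is *acyclic* if it has no injective cycle (of length at least 3,
i.e. not doubling back along a single edge). -/
def Acyclic {α : Type*} (E : Set (α × α)) : Prop :=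
  ¬ ∃ (f : ℕ → α) (n : ℕ), 3 ≤ n ∧ IsWalk E f n ∧ f n = f 0 ∧
      ∀ i j, i < n → j < n → f i = f j → i = j

/-- The edge set `T_𝒞` of the structure tree on `V_𝒞`. -/
def TEdges {X : Type*} (𝒞 : Set (Set X)) : Set (Set (Set X) × Set (Set X)) :=
  {p | IsVertex 𝒞 p.1 ∧ IsVertex 𝒞 p.2 ∧ ∃ C, p.1 \ p.2 = {C}}
section Aux

open Set

variable {X : Type*} {𝒞 : Set (Set X)}

lemma aux_compl_mem {v : Set (Set X)} (hv : IsVertex 𝒞 v) {C : Set X}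
    (hC : C ∈ 𝒞) (h : C ∉ v) : Cᶜ ∈ v := by
  rcases hv.2.1 C hC with ⟨h1, _⟩ | ⟨h2, _⟩
  · exact absurd h1 h
  · exact h2

lemma aux_compl_not_mem {v : Set (Set X)} (hv : IsVertex 𝒞 v) {C : Set X}
    (hC : C ∈ 𝒞) (h : C ∈ v) : Cᶜ ∉ v := by
  rcases hv.2.1 C hC with ⟨_, h1⟩ | ⟨_, h2⟩
  · exact h1
  · exact absurd h h2

lemma aux_diff_compl {p q : Set (Set X)} (hp : IsVertex 𝒞 p) (hq : IsVertex 𝒞 q)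
    {C : Set X} (h : p \ q = {C}) : q \ p = {Cᶜ} := by
  have hC : C ∈ p \ q := h ▸ rfl
  have hCc : Cᶜ ∈ q := aux_compl_mem hq (hp.1 hC.1) hC.2
  have hCcp : Cᶜ ∉ p := aux_compl_not_mem hp (hp.1 hC.1) hC.1
  ext D
  constructor
  · rintro ⟨hDq, hDp⟩
    have hD𝒞 : D ∈ 𝒞 := hq.1 hDq
    have : Dᶜ ∈ p \ q := ⟨aux_compl_mem hp hD𝒞 hDp, aux_compl_not_mem hq hD𝒞 hDq⟩
    rw [h, mem_singleton_iff] at this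
    have := congrArg compl this
    simpa using this
  · rintro rfl
    exact ⟨hCc, hCcp⟩

/-- Lower bound step: along an edge the difference with `v` drops by at most one. -/
lemma aux_step {p q v : Set (Set X)} (hpq : (p, q) ∈ TEdges 𝒞) :
    (p \ v).encard ≤ (q \ v).encard + 1 := by
  obtain ⟨hp, hq, C, hC⟩ := hpq
  have hsub : p \ v ⊆ (q \ v) ∪ {C} := by
    rintro D ⟨hDp, hDv⟩
    by_cases hDq : D ∈ q
    · exact Or.inl ⟨hDq, hDv⟩
    · right
      have : D ∈ p \ q := ⟨hDp, hDq⟩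
      rw [hC] at this
      exact this
  calc (p \ v).encard ≤ ((q \ v) ∪ {C}).encard := encard_le_encard hsub
    _ ≤ (q \ v).encard + ({C} : Set (Set X)).encard := encard_union_le _ _
    _ = (q \ v).encard + 1 := by rw [encard_singleton]

lemma aux_lower {v : Set (Set X)} (n : ℕ) :
    ∀ f : ℕ → Set (Set X), IsWalk (TEdges 𝒞) f n → f n = v →
      (f 0 \ v).encard ≤ (n : ℕ∞) := by
  induction n with
  | zero =>
    intro f _ hfn
    simp [hfn]
  | succ n ih =>
    intro f hw hfn
    have h1 : (f 0 \ v).encard ≤ (f 1 \ v).encard + 1 :=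
      aux_step (hw 0 (Nat.succ_pos n))
    have h2 : ((fun i => f (i + 1)) 0 \ v).encard ≤ (n : ℕ∞) := by
      refine ih (fun i => f (i + 1)) (fun i hi => ?_) hfn
      exact hw (i + 1) (Nat.succ_lt_succ hi)
    calc (f 0 \ v).encard ≤ (f 1 \ v).encard + 1 := h1
      _ ≤ (n : ℕ∞) + 1 := add_le_add_left h2 1
      _ = ((n + 1 : ℕ) : ℕ∞) := by push_cast; ring

lemma aux_diff_empty_eq {u v : Set (Set X)} (hu : IsVertex 𝒞 u) (hv : IsVertex 𝒞 v)
    (h : u \ v = ∅) : u = v := by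
  have huv : u ⊆ v := diff_eq_empty.mp h
  refine Set.Subset.antisymm huv fun D hDv => ?_
  by_contra hDu
  have hD𝒞 : D ∈ 𝒞 := hv.1 hDv
  have h1 : Dᶜ ∈ u := aux_compl_mem hu hD𝒞 hDu
  have h2 : Dᶜ ∉ v := aux_compl_not_mem hv hD𝒞 hDv
  exact h2 (huv h1)

lemma aux_ne_compl (h𝒞 : Treeset 𝒞) {C : Set X} (hC : C ∈ 𝒞) : C ≠ Cᶜ := by
  obtain ⟨x, hx⟩ := (h𝒞.1 C hC).1
  intro h
  rw [h] at hx
  exact hx (h ▸ hx)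

/-- The key construction: replacing a minimal element of `u \ v` by its complement
yields a vertex adjacent to `u`. -/
lemma aux_move (h𝒞 : Treeset 𝒞) {u v : Set (Set X)} (hu : IsVertex 𝒞 u)
    (hv : IsVertex 𝒞 v) {C : Set X} (hCuv : C ∈ u \ v)
    (hmin : ∀ D ∈ u \ v, D ⊆ C → D = C) :
    IsVertex 𝒞 ((u \ {C}) ∪ {Cᶜ}) ∧ u \ ((u \ {C}) ∪ {Cᶜ}) = {C} ∧
      ((u \ {C}) ∪ {Cᶜ}) \ v = (u \ v) \ {C} := by
  obtain ⟨hCu, hCv⟩ := hCuv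
  have hC𝒞 : C ∈ 𝒞 := hu.1 hCu
  have hCc𝒞 : Cᶜ ∈ 𝒞 := h𝒞.2.2.1 C hC𝒞
  have hne : C ≠ Cᶜ := aux_ne_compl h𝒞 hC𝒞
  have hnec : Cᶜ ≠ C := hne.symm
  have hCcu : Cᶜ ∉ u := aux_compl_not_mem hu hC𝒞 hCu
  have hCcv : Cᶜ ∈ v := aux_compl_mem hv hC𝒞 hCv
  set w : Set (Set X) := (u \ {C}) ∪ {Cᶜ} with hw
  have hmemw : ∀ D, D ∈ w ↔ (D ∈ u ∧ D ≠ C) ∨ D = Cᶜ := by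
    intro D
    simp only [hw, mem_union, mem_diff, mem_singleton_iff]
  have hvert : IsVertex 𝒞 w := by
    refine ⟨?_, ?_, ?_, ?_⟩
    · intro D hD
      rcases (hmemw D).1 hD with ⟨hDu, _⟩ | rfl
      · exact hu.1 hDu
      · exact hCc𝒞
    · intro D hD𝒞
      by_cases hDC : D = C
      · rw [hDC]
        right
        refine ⟨(hmemw Cᶜ).2 (Or.inr rfl), fun hCw => ?_⟩
        rcases (hmemw C).1 hCw with ⟨_, h⟩ | h
        · exact h rfl
        · exact hne h
      · by_cases hDCc : D = Cᶜ
        · rw [hDCc]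
          left
          refine ⟨(hmemw Cᶜ).2 (Or.inr rfl), fun hccw => ?_⟩
          rw [compl_compl] at hccw
          rcases (hmemw C).1 hccw with ⟨_, h⟩ | h
          · exact h rfl
          · exact hne h
        · have hDcC : Dᶜ ≠ C := fun h => hDCc (by rw [← h, compl_compl])
          have hDcCc : Dᶜ ≠ Cᶜ := fun h => hDC (compl_injective h)
          have hDw : D ∈ w ↔ D ∈ u := by
            rw [hmemw]
            constructor
            · rintro (⟨h, _⟩ | rfl)
              · exact h
              · exact absurd rfl hDCc
            · intro h; exact Or.inl ⟨h, hDC⟩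
          have hDcw : Dᶜ ∈ w ↔ Dᶜ ∈ u := by
            rw [hmemw]
            constructor
            · rintro (⟨h, _⟩ | h)
              · exact h
              · exact absurd h hDcCc
            · intro h; exact Or.inl ⟨h, hDcC⟩
          rcases hu.2.1 D hD𝒞 with ⟨h1, h2⟩ | ⟨h1, h2⟩
          · exact Or.inl ⟨hDw.2 h1, fun h => h2 (hDcw.1 h)⟩
          · exact Or.inr ⟨hDcw.2 h1, fun h => h2 (hDw.1 h)⟩
    · intro D hDw E hE𝒞 hDE
      rcases (hmemw D).1 hDw with ⟨hDu, hDC⟩ | hD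
      · have hEu : E ∈ u := hu.2.2.1 D hDu E hE𝒞 hDE
        refine (hmemw E).2 (Or.inl ⟨hEu, ?_⟩)
        intro hEC
        rw [hEC] at hDE
        have hDv : D ∉ v := fun h => hCv (hv.2.2.1 D h C hC𝒞 hDE)
        exact hDC (hmin D ⟨hDu, hDv⟩ hDE)
      · -- D = Cᶜ, Cᶜ ⊆ E
        rw [hD] at hDE
        by_cases hECc : E = Cᶜ
        · rw [hECc]
          exact (hmemw _).2 (Or.inr rfl)
        · have hEC : E ≠ C := by
            intro hEC
            rw [hEC] at hDE
            obtain ⟨x, hx⟩ := (h𝒞.1 Cᶜ hCc𝒞).1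
            exact hx (hDE hx)
          refine (hmemw E).2 (Or.inl ⟨?_, hEC⟩)
          by_contra hEu
          have hEcu : Eᶜ ∈ u := aux_compl_mem hu hE𝒞 hEu
          have hEcC : Eᶜ ⊆ C := compl_subset_comm.mp hDE
          have hEcv : Eᶜ ∉ v := fun h => hCv (hv.2.2.1 Eᶜ h C hC𝒞 hEcC)
          have hh : Eᶜ = C := hmin Eᶜ ⟨hEcu, hEcv⟩ hEcC
          exact hECc (by rw [← compl_compl E, hh])
    · rintro ⟨f, hf, hdec⟩
      have hinj : Function.Injective f := by
        have hmono : StrictAnti f := strictAnti_nat_of_succ_lt hdec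
        exact hmono.injective
      have hone : ∀ m n, f m = Cᶜ → f n = Cᶜ → m = n := fun m n hm hn =>
        hinj (hm.trans hn.symm)
      -- choose N beyond any occurrence of Cᶜ
      have : ∃ N : ℕ, ∀ k, f (k + N) ≠ Cᶜ := by
        by_cases h : ∃ n, f n = Cᶜ
        · obtain ⟨n, hn⟩ := h
          refine ⟨n + 1, fun k hk => ?_⟩
          have := hone _ _ hk hn
          omega
        · exact ⟨0, fun k hk => h ⟨k + 0, hk⟩⟩
      obtain ⟨N, hN⟩ := this
      refine hu.2.2.2 ⟨fun k => f (k + N), fun k => ?_, fun k => ?_⟩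
      · rcases (hmemw _).1 (hf (k + N)) with ⟨h, _⟩ | h
        · exact h
        · exact absurd h (hN k)
      · show f ((k + 1) + N) ⊂ f (k + N)
        have he : k + N + 1 = (k + 1) + N := by omega
        have := hdec (k + N)
        rwa [he] at this
  refine ⟨hvert, ?_, ?_⟩
  · ext D
    constructor
    · rintro ⟨hDu, hDw⟩
      have hD : ¬((D ∈ u ∧ D ≠ C) ∨ D = Cᶜ) := fun h => hDw ((hmemw D).2 h)
      push_neg at hD
      show D = C
      exact hD.1 hDu
    · intro hD
      rw [show D = C from hD]
      refine ⟨hCu, fun hCw => ?_⟩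
      rcases (hmemw C).1 hCw with ⟨_, h⟩ | h
      · exact h rfl
      · exact hne h
  · ext D
    constructor
    · rintro ⟨hDw, hDv⟩
      rcases (hmemw D).1 hDw with ⟨hDu, hDC⟩ | h
      · exact ⟨⟨hDu, hDv⟩, hDC⟩
      · rw [h] at hDv
        exact (hDv hCcv).elim
    · rintro ⟨⟨hDu, hDv⟩, hDC⟩
      exact ⟨(hmemw D).2 (Or.inl ⟨hDu, hDC⟩), hDv⟩

/-- Upper bound: if `u \ v` is finite of size `n`, there is a walk of length `n`. -/
lemma aux_upper (h𝒞 : Treeset 𝒞) {v : Set (Set X)} (hv : IsVertex 𝒞 v) :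
    ∀ n : ℕ, ∀ u : Set (Set X), IsVertex 𝒞 u → (u \ v).Finite → (u \ v).ncard = n →
      ∃ f : ℕ → Set (Set X), f 0 = u ∧ f n = v ∧ IsWalk (TEdges 𝒞) f n := by
  intro n
  induction n with
  | zero =>
    intro u hu hfin hcard
    have : u \ v = ∅ := (Set.ncard_eq_zero hfin).mp hcard
    have := aux_diff_empty_eq hu hv this
    exact ⟨fun _ => v, this ▸ rfl, rfl, fun i hi => absurd hi (Nat.not_lt_zero i)⟩
  | succ n ih =>
    intro u hu hfin hcard
    have hne : (u \ v).Nonempty := by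
      rw [Set.nonempty_iff_ne_empty]
      intro h
      rw [h] at hcard
      simp at hcard
    obtain ⟨C, hC, hCmin⟩ := hfin.exists_minimal hne
    have hmin : ∀ D ∈ u \ v, D ⊆ C → D = C := fun D hD hDC => subset_antisymm hDC (hCmin hD hDC)
    obtain ⟨hwvert, hdiff, hwv⟩ := aux_move h𝒞 hu hv hC hmin
    set w : Set (Set X) := (u \ {C}) ∪ {Cᶜ} with hwdef
    have hwfin : (w \ v).Finite := by rw [hwv]; exact hfin.diff
    have hwcard : (w \ v).ncard = n := by
      rw [hwv, Set.ncard_diff_singleton_of_mem hC]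
      omega
    obtain ⟨g, hg0, hgn, hgw⟩ := ih w hwvert hwfin hwcard
    refine ⟨fun i => if i = 0 then u else g (i - 1), by simp, ?_, ?_⟩
    · simp [hgn]
    · intro i hi
      rcases Nat.eq_zero_or_pos i with rfl | hipos
      · simp only [if_pos rfl, if_neg (Nat.one_ne_zero)]
        simp only [Nat.sub_self]  -- 1 - 1 = 0
        rw [hg0]
        exact ⟨hu, hwvert, C, hdiff⟩
      · have h1 : i ≠ 0 := Nat.pos_iff_ne_zero.mp hipos
        have h2 : i + 1 ≠ 0 := Nat.succ_ne_zero i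
        simp only [if_neg h1, if_neg h2]
        have : i + 1 - 1 = (i - 1) + 1 := by omega
        rw [this]
        exact hgw (i - 1) (by omega)

end Aux

/-- For vertices `u, v ∈ V_𝒞`, the path metric of the structure tree
satisfies `d_{T_𝒞}(u,v) = |u \ v|`. -/
theorem structureTree_dist_eq_encard_diff {X : Type*} (𝒞 : Set (Set X))
    (h𝒞 : Treeset 𝒞) (u v : Set (Set X)) (hu : IsVertex 𝒞 u) (hv : IsVertex 𝒞 v) :
    graphDist (TEdges 𝒞) u v = (u \ v).encard := by
  apply le_antisymm
  · rcases (u \ v).finite_or_infinite with hfin | hinf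
    · obtain ⟨f, hf0, hfn, hwalk⟩ := aux_upper h𝒞 hv ((u \ v).ncard) u hu hfin rfl
      have hmem : (((u \ v).ncard : ℕ) : ℕ∞) ∈
          {d : ℕ∞ | ∃ (n : ℕ) (g : ℕ → Set (Set X)), d = (n : ℕ∞) ∧ g 0 = u ∧ g n = v ∧
            IsWalk (TEdges 𝒞) g n} := ⟨(u \ v).ncard, f, rfl, hf0, hfn, hwalk⟩
      calc graphDist (TEdges 𝒞) u v ≤ (((u \ v).ncard : ℕ) : ℕ∞) := sInf_le hmem
        _ = (u \ v).encard := hfin.cast_ncard_eq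
    · rw [hinf.encard_eq]
      exact le_top
  · apply le_sInf
    rintro d ⟨n, f, rfl, hf0, hfn, hwalk⟩
    rw [← hf0]
    exact aux_lower n f hwalk hfn
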